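/- For every point p = (x,y,z) ∈ ℝ³, with r = √(x² + y²), the linear functional γ_p(v) = cos(r)·v_z + g(x,y)·(x·v_y − y·v_x) on ℝ³ (where g(x,y) = sin(r)/r for r ≠ 0 and g = 1 at the origin) is nonzero, and its kernel is a 2-dimensional subspace of ℝ³. Moreover, at every point (0,0,z) on the z-axis this kernel equals the horizontal plane {v ∈ ℝ³ : v_z = 0}. -/

import Mathlib

noncomputable section

def g (q : ℝ × ℝ) : ℝ :=
  if q = (0, 0) then 1
  else Real.sin (Real.sqrt (q.1 ^ 2 + q.2 ^ 2)) / Real.sqrt (q.1 ^ 2 + q.2 ^ 2)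

def gammaL (p : ℝ × ℝ × ℝ) : (ℝ × ℝ × ℝ) →ₗ[ℝ] ℝ where
  toFun v := Real.cos (Real.sqrt (p.1 ^ 2 + p.2.1 ^ 2)) * v.2.2 +
    g (p.1, p.2.1) * (p.1 * v.2.1 - p.2.1 * v.1)
  map_add' a b := by
    simp only [Prod.fst_add, Prod.snd_add]
    ring
  map_smul' c a := by
    simp only [Prod.smul_fst, Prod.smul_snd, smul_eq_mul, RingHom.id_apply]
    ring

lemma gammaL_ne_zero (p : ℝ × ℝ × ℝ) : gammaL p ≠ 0 := by
  set r := Real.sqrt (p.1 ^ 2 + p.2.1 ^ 2) with hr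
  by_cases hc : Real.cos r = 0
  · -- then r ≠ 0 and sin r ≠ 0
    have hrne : r ≠ 0 := by
      intro h0
      rw [h0, Real.cos_zero] at hc
      exact one_ne_zero hc
    have hrpos : 0 < r := lt_of_le_of_ne (Real.sqrt_nonneg _) (Ne.symm hrne)
    have hq : (p.1, p.2.1) ≠ ((0 : ℝ), (0 : ℝ)) := by
      intro h
      apply hrne
      rw [hr, Prod.mk.injEq] at *
      rw [h.1, h.2]
      simp
    have hsum : p.1 ^ 2 + p.2.1 ^ 2 = r ^ 2 := by
      rw [hr, Real.sq_sqrt (by positivity)]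
    have hsin : Real.sin r ≠ 0 := by
      intro hs
      have := Real.sin_sq_add_cos_sq r
      rw [hs, hc] at this
      norm_num at this
    intro h0
    have := congrArg (fun f => f (-p.2.1, p.1, 0)) h0
    simp only [gammaL, LinearMap.coe_mk, AddHom.coe_mk, LinearMap.zero_apply] at this
    rw [g, if_neg hq] at this
    simp only [mul_zero, zero_add] at this
    have hval : Real.sin r / r * (p.1 * p.1 - p.2.1 * -p.2.1) = Real.sin r * r := by
      have h1 : p.1 * p.1 - p.2.1 * -p.2.1 = r ^ 2 := by rw [← hsum]; ring
      rw [h1]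
      field_simp
    rw [hval] at this
    exact (mul_ne_zero hsin hrne) this
  · intro h0
    have := congrArg (fun f => f (0, 0, 1)) h0
    simp only [gammaL, LinearMap.coe_mk, AddHom.coe_mk, LinearMap.zero_apply] at this
    simp at this
    exact hc this

lemma finrank_prod3 : Module.finrank ℝ (ℝ × ℝ × ℝ) = 3 := by
  simp [Module.finrank_prod]

/-- At every point `p` of `ℝ³` the overtwisted form `γ_p` is a nonzero linear functional,
so its kernel is a 2-dimensional subspace of `ℝ³` (a genuine 2-plane field); moreover at
every point `(0,0,z)` of the `z`-axis this kernel is the horizontal plane `{v : v_z = 0}`. -/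
theorem overtwisted_form_nowhere_zero_plane_field :
    (∀ p : ℝ × ℝ × ℝ, gammaL p ≠ 0 ∧
      Module.finrank ℝ (LinearMap.ker (gammaL p)) = 2) ∧
    (∀ z : ℝ, (LinearMap.ker (gammaL (0, 0, z)) : Set (ℝ × ℝ × ℝ)) =
      {v : ℝ × ℝ × ℝ | v.2.2 = 0}) := by
  constructor
  · intro p
    have hne := gammaL_ne_zero p
    refine ⟨hne, ?_⟩
    have hsurj : Function.Surjective (gammaL p) :=
      LinearMap.surjective_of_ne_zero hne
    have hrange : LinearMap.range (gammaL p) = ⊤ := LinearMap.range_eq_top.mpr hsurj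
    have h := LinearMap.finrank_range_add_finrank_ker (gammaL p)
    rw [hrange, finrank_top, finrank_prod3, Module.finrank_self] at h
    omega
  · intro z
    ext v
    simp only [SetLike.mem_coe, LinearMap.mem_ker, Set.mem_setOf_eq]
    simp [gammaL]
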